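/- Let H be a finite-dimensional involutory Hopf algebra over a field k with a two-sided integral μ ∈ H* and a two-sided cointegral e ∈ H such that μ(e) = 1. Then for every x ∈ H, S(x) = Σ₍ₑ₎ μ(e₍₁₎·x)·e₍₂₎ = Σ₍ₑ₎ μ(e₍₂₎·x)·e₍₁₎. -/
import Mathlib


open TensorProduct Coalgebra HopfAlgebra

set_option maxHeartbeats 1000000
set_option synthInstance.maxHeartbeats 200000

section Helpers

variable {k H : Type*} [Field k] [Ring H] [HopfAlgebra k H]

lemma mul_tmul_one_left' (x : H) (u : H ⊗[k] H) :
    u * (x ⊗ₜ[k] (1 : H)) = LinearMap.rTensor H (LinearMap.mulRight k x) u := by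
  induction u using TensorProduct.induction_on with
  | zero => simp
  | tmul a b => simp [Algebra.TensorProduct.tmul_mul_tmul]
  | add u v hu hv => simp [add_mul, hu, hv]

lemma mul_one_tmul_right' (x : H) (u : H ⊗[k] H) :
    u * ((1 : H) ⊗ₜ[k] x) = LinearMap.lTensor H (LinearMap.mulRight k x) u := by
  induction u using TensorProduct.induction_on with
  | zero => simp
  | tmul a b => simp [Algebra.TensorProduct.tmul_mul_tmul]
  | add u v hu hv => simp [add_mul, hu, hv]

lemma lid_rTensor_lTensor' (μ : Module.Dual k H) (f : H →ₗ[k] H) (u : H ⊗[k] H) :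
    TensorProduct.lid k H (LinearMap.rTensor H μ (LinearMap.lTensor H f u))
      = f (TensorProduct.lid k H (LinearMap.rTensor H μ u)) := by
  induction u using TensorProduct.induction_on with
  | zero => simp
  | tmul a b => simp
  | add u v hu hv => simp [hu, hv]

lemma rid_lTensor_rTensor' (μ : Module.Dual k H) (f : H →ₗ[k] H) (u : H ⊗[k] H) :
    TensorProduct.rid k H (LinearMap.lTensor H μ (LinearMap.rTensor H f u))
      = f (TensorProduct.rid k H (LinearMap.lTensor H μ u)) := by
  induction u using TensorProduct.induction_on with
  | zero => simp
  | tmul a b => simp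
  | add u v hu hv => simp [hu, hv]

lemma keyA' (e : H) (he : ∀ z : H, e * z = counit (R := k) z • e) (y : H) :
    (comul (R := k) e) * (y ⊗ₜ[k] (1 : H))
      = (comul (R := k) e) * ((1 : H) ⊗ₜ[k] antipode (R := k) y) := by
  set t : H ⊗[k] H := comul (R := k) e with ht
  have hstar : ∀ z : H, t * comul (R := k) z = counit (R := k) z • t := by
    intro z
    rw [ht, ← Bialgebra.comul_mul, he z, map_smul]
  set χ : H ⊗[k] (H ⊗[k] H) →ₗ[k] H ⊗[k] H :=
    LinearMap.lTensor H (LinearMap.mul' k H ∘ₗ LinearMap.lTensor H (antipode (R := k))) with hχ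
  have hsub : ∀ (u : H ⊗[k] H) (d : H),
      χ (TensorProduct.assoc k H H H (u ⊗ₜ[k] d))
        = u * ((1 : H) ⊗ₜ[k] antipode (R := k) d) := by
    intro u d
    induction u using TensorProduct.induction_on with
    | zero =>
      rw [TensorProduct.zero_tmul, _root_.map_zero, _root_.map_zero, zero_mul]
    | tmul a b => simp [hχ, Algebra.TensorProduct.tmul_mul_tmul]
    | add u v hu hv => simp [TensorProduct.add_tmul, add_mul, hu, hv]
  have h1 : χ (LinearMap.lTensor H (comul (R := k)) (comul (R := k) y))
      = y ⊗ₜ[k] (1 : H) := by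
    rw [hχ, ← LinearMap.lTensor_comp_apply, LinearMap.comp_assoc,
      mul_antipode_lTensor_comul, LinearMap.lTensor_comp_apply,
      Coalgebra.lTensor_counit_comul, LinearMap.lTensor_tmul]
    simp
  have hmain : ∀ v : H ⊗[k] H,
      t * χ (TensorProduct.assoc k H H H (LinearMap.rTensor H (comul (R := k)) v))
        = t * (TensorProduct.map ((Algebra.linearMap k H) ∘ₗ counit (R := k))
            (antipode (R := k)) v) := by
    intro v
    induction v using TensorProduct.induction_on with
    | zero => simp
    | tmul z d =>
      rw [LinearMap.rTensor_tmul, hsub, ← mul_assoc, hstar, TensorProduct.map_tmul,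
        LinearMap.comp_apply, Algebra.linearMap_apply, Algebra.algebraMap_eq_smul_one,
        smul_mul_assoc, ← TensorProduct.smul_tmul', mul_smul_comm]
    | add u v hu hv => simp only [map_add, mul_add, hu, hv]
  have h2 := Coalgebra.coassoc_apply (R := k) y
  have := hmain (comul (R := k) y)
  rw [h2, h1] at this
  rw [this]
  congr 1
  rw [← LinearMap.lTensor_comp_rTensor, LinearMap.comp_apply,
    LinearMap.rTensor_comp_apply, Coalgebra.rTensor_counit_comul, LinearMap.rTensor_tmul,
    Algebra.linearMap_apply, map_one, LinearMap.lTensor_tmul]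

end Helpers

/-- For a finite-dimensional involutory Hopf algebra `H` over a field `k` with a
two-sided integral `μ ∈ H*` and a two-sided cointegral `e ∈ H` such that `μ(e) = 1`, for every
`x ∈ H` we have `S(x) = Σ μ(e₍₁₎·x)·e₍₂₎ = Σ μ(e₍₂₎·x)·e₍₁₎`. -/
theorem antipode_eq_integral_cointegral_formula
    {k H : Type*} [Field k] [Ring H] [HopfAlgebra k H] [FiniteDimensional k H]
    (hinv : ∀ x : H, antipode (R := k) (antipode (R := k) x) = x)
    (μ : Module.Dual k H) (e : H)
    (hμ : ∀ x : H,
      TensorProduct.rid k H (LinearMap.lTensor H μ (comul (R := k) x)) = μ x • (1 : H) ∧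
      TensorProduct.lid k H (LinearMap.rTensor H μ (comul (R := k) x)) = μ x • (1 : H))
    (he : ∀ x : H, x * e = counit (R := k) x • e ∧ e * x = counit (R := k) x • e)
    (hμe : μ e = 1) :
    ∀ x : H,
      antipode (R := k) x
        = TensorProduct.lid k H
            (LinearMap.rTensor H (μ ∘ₗ LinearMap.mulRight k x) (comul (R := k) e)) ∧
      antipode (R := k) x
        = TensorProduct.rid k H
            (LinearMap.lTensor H (μ ∘ₗ LinearMap.mulRight k x) (comul (R := k) e)) := by
  intro x
  have he2 : ∀ z : H, e * z = counit (R := k) z • e := fun z => (he z).2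
  constructor
  · have hA := keyA' e he2 x
    symm
    calc TensorProduct.lid k H
          (LinearMap.rTensor H (μ ∘ₗ LinearMap.mulRight k x) (comul (R := k) e))
        = TensorProduct.lid k H
            (LinearMap.rTensor H μ
              (LinearMap.rTensor H (LinearMap.mulRight k x) (comul (R := k) e))) := by
          rw [← LinearMap.rTensor_comp_apply]
      _ = TensorProduct.lid k H
            (LinearMap.rTensor H μ (comul (R := k) e * (x ⊗ₜ[k] (1 : H)))) := by
          rw [mul_tmul_one_left']
      _ = TensorProduct.lid k H
            (LinearMap.rTensor H μ
              (comul (R := k) e * ((1 : H) ⊗ₜ[k] antipode (R := k) x))) := by rw [hA]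
      _ = TensorProduct.lid k H
            (LinearMap.rTensor H μ
              (LinearMap.lTensor H (LinearMap.mulRight k (antipode (R := k) x))
                (comul (R := k) e))) := by rw [mul_one_tmul_right']
      _ = LinearMap.mulRight k (antipode (R := k) x)
            (TensorProduct.lid k H (LinearMap.rTensor H μ (comul (R := k) e))) :=
          lid_rTensor_lTensor' μ _ _
      _ = antipode (R := k) x := by
          rw [(hμ e).2, hμe, one_smul, LinearMap.mulRight_apply, one_mul]
  · have hA := keyA' e he2 (antipode (R := k) x)
    rw [hinv x] at hA
    symm
    calc TensorProduct.rid k H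
          (LinearMap.lTensor H (μ ∘ₗ LinearMap.mulRight k x) (comul (R := k) e))
        = TensorProduct.rid k H
            (LinearMap.lTensor H μ
              (LinearMap.lTensor H (LinearMap.mulRight k x) (comul (R := k) e))) := by
          rw [← LinearMap.lTensor_comp_apply]
      _ = TensorProduct.rid k H
            (LinearMap.lTensor H μ (comul (R := k) e * ((1 : H) ⊗ₜ[k] x))) := by
          rw [mul_one_tmul_right']
      _ = TensorProduct.rid k H
            (LinearMap.lTensor H μ
              (comul (R := k) e * (antipode (R := k) x ⊗ₜ[k] (1 : H)))) := by rw [hA]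
      _ = TensorProduct.rid k H
            (LinearMap.lTensor H μ
              (LinearMap.rTensor H (LinearMap.mulRight k (antipode (R := k) x))
                (comul (R := k) e))) := by rw [mul_tmul_one_left']
      _ = LinearMap.mulRight k (antipode (R := k) x)
            (TensorProduct.rid k H (LinearMap.lTensor H μ (comul (R := k) e))) :=
          rid_lTensor_rTensor' μ _ _
      _ = antipode (R := k) x := by
          rw [(hμ e).1, hμe, one_smul, LinearMap.mulRight_apply, one_mul]
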